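/- arXiv:2203.01109 — 2 statements merged into one kernel-verified Lean document; each statement's English description precedes it below -/
import Mathlib

section
/- Let N ≥ 3 and let a_1, …, a_N be vectors in a complex inner product space E with norm ‖·‖ induced by the inner product. Then ∑_{s=1}^N ‖a_s‖² ≥ (1/(N − 2)) · [ ∑_{1 ≤ s < t ≤ N} ‖a_s + a_t‖² − (1/(N − 1)²) · (∑_{1 ≤ s < t ≤ N} ‖a_s + a_t‖)² ]. -/
open Finset

lemma pair_sum {M : Type*} [AddCommMonoid M] {N : ℕ} (f : Fin N → M) :
    ∑ p ∈ univ.filter (fun p : Fin N × Fin N => p.1 < p.2), (f p.1 + f p.2)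
      = ∑ s : Fin N, (N - 1) • f s := by
  rw [Finset.sum_add_distrib]
  have h1 : ∑ p ∈ univ.filter (fun p : Fin N × Fin N => p.1 < p.2), f p.1
      = ∑ s : Fin N, (N - 1 - (s : ℕ)) • f s := by
    rw [Finset.sum_filter, Fintype.sum_prod_type]
    refine Finset.sum_congr rfl fun s _ => ?_
    rw [← Finset.sum_filter]
    have : filter (fun a => s < a) univ = Ioi s := by ext x; simp
    simp [this, Finset.sum_const, Fin.card_Ioi]
  have h2 : ∑ p ∈ univ.filter (fun p : Fin N × Fin N => p.1 < p.2), f p.2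
      = ∑ t : Fin N, (t : ℕ) • f t := by
    rw [Finset.sum_filter, Fintype.sum_prod_type, Finset.sum_comm]
    refine Finset.sum_congr rfl fun t _ => ?_
    rw [← Finset.sum_filter]
    have : filter (fun a => a < t) univ = Iio t := by ext x; simp
    simp [this, Finset.sum_const, Fin.card_Iio]
  rw [h1, h2, ← Finset.sum_add_distrib]
  refine Finset.sum_congr rfl fun s _ => ?_
  rw [← add_smul]
  congr 1
  have := s.isLt
  omega

open Finset in
theorem sum_sq_norm_ge_lb1 {E : Type*} [NormedAddCommGroup E] [InnerProductSpace ℂ E]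
    (N : ℕ) (hN : 3 ≤ N) (a : Fin N → E) :
    ∑ s, ‖a s‖ ^ 2 ≥
      (1 / ((N : ℝ) - 2)) *
        ((∑ p ∈ univ.filter (fun p : Fin N × Fin N => p.1 < p.2), ‖a p.1 + a p.2‖ ^ 2) -
          (1 / ((N : ℝ) - 1) ^ 2) *
            (∑ p ∈ univ.filter (fun p : Fin N × Fin N => p.1 < p.2), ‖a p.1 + a p.2‖) ^ 2) := by
  have hn3 : (3 : ℝ) ≤ (N : ℝ) := by exact_mod_cast hN
  set n : ℝ := (N : ℝ) with hn
  set T : E := ∑ s, a s with hT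
  set S : ℝ := ∑ s, ‖a s‖ ^ 2 with hS
  set g : Fin N → Fin N → ℝ := fun s t => RCLike.re (inner ℂ (a s) (a t) : ℂ) with hg
  set R : ℝ := ∑ p ∈ univ.filter (fun p : Fin N × Fin N => p.1 < p.2), g p.1 p.2 with hR
  set P : ℝ := ∑ p ∈ univ.filter (fun p : Fin N × Fin N => p.1 < p.2), ‖a p.1 + a p.2‖ ^ 2
    with hP
  set Q : ℝ := ∑ p ∈ univ.filter (fun p : Fin N × Fin N => p.1 < p.2), ‖a p.1 + a p.2‖ with hQdef
  -- ‖T‖² = S + 2R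
  have hA : ‖T‖ ^ 2 = S + 2 * R := by
    have e0 : ‖T‖ ^ 2 = ∑ p : Fin N × Fin N, g p.1 p.2 := by
      rw [← inner_self_eq_norm_sq (𝕜 := ℂ) T, hT, Fintype.sum_prod_type]
      rw [sum_inner]
      simp only [inner_sum, map_sum, hg]
    have e1 : ∑ p ∈ univ.filter (fun p : Fin N × Fin N => ¬ p.1 < p.2), g p.1 p.2
        = ∑ p ∈ univ.filter (fun p : Fin N × Fin N => p.2 < p.1), g p.1 p.2
          + ∑ s, g s s := by
      rw [← Finset.sum_filter_add_sum_filter_not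
        (univ.filter (fun p : Fin N × Fin N => ¬ p.1 < p.2))
        (fun p : Fin N × Fin N => p.2 < p.1), Finset.filter_filter, Finset.filter_filter]
      congr 1
      · apply Finset.sum_congr _ fun _ _ => rfl
        ext p
        simp only [Finset.mem_filter, Finset.mem_univ, true_and, Fin.lt_def]
        omega
      · have h : univ.filter (fun p : Fin N × Fin N => ¬ p.1 < p.2 ∧ ¬ p.2 < p.1)
            = (univ : Finset (Fin N)).diag := by
          ext p
          simp only [Finset.mem_filter, Finset.mem_univ, true_and, Finset.mem_diag,
            Prod.ext_iff, Fin.lt_def, Fin.ext_iff]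
          omega
        rw [h, Finset.sum_diag]
    have e2 : ∑ p ∈ univ.filter (fun p : Fin N × Fin N => p.2 < p.1), g p.1 p.2 = R := by
      rw [hR]
      refine Finset.sum_nbij' (fun p => p.swap) (fun p => p.swap) ?_ ?_ ?_ ?_
        (fun p _ => inner_re_symm (a p.1) (a p.2)) <;> simp
    have e3 : ∀ s : Fin N, g s s = ‖a s‖ ^ 2 := fun s => inner_self_eq_norm_sq (a s)
    rw [e0, ← Finset.sum_filter_add_sum_filter_not univ (fun p : Fin N × Fin N => p.1 < p.2),
      e1, e2]
    simp only [e3]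
    rw [hS, hR]
    ring
  -- P = (n-1) S + 2 R
  have hPid : P = (n - 1) * S + 2 * R := by
    have e0 : P = ∑ p ∈ univ.filter (fun p : Fin N × Fin N => p.1 < p.2),
        ((‖a p.1‖ ^ 2 + ‖a p.2‖ ^ 2) + 2 * g p.1 p.2) := by
      refine Finset.sum_congr rfl fun p _ => ?_
      rw [norm_add_sq (𝕜 := ℂ)]; ring
    rw [e0, Finset.sum_add_distrib, pair_sum (fun s => ‖a s‖ ^ 2), ← Finset.mul_sum, hR, hS]
    have : ((N - 1 : ℕ) : ℝ) = n - 1 := by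
      rw [Nat.cast_sub (by omega)]; simp [hn]
    simp only [nsmul_eq_mul, this, ← Finset.mul_sum]
  -- Q ≥ (n-1) ‖T‖
  have hQ : (n - 1) * ‖T‖ ≤ Q := by
    have e0 : ∑ p ∈ univ.filter (fun p : Fin N × Fin N => p.1 < p.2), (a p.1 + a p.2)
        = (N - 1) • T := by
      rw [pair_sum a, ← Finset.smul_sum, hT]
    have e1 : ‖((N - 1 : ℕ)) • T‖ = (n - 1) * ‖T‖ := by
      rw [← Nat.cast_smul_eq_nsmul ℝ, norm_smul, Real.norm_eq_abs,
        Nat.cast_sub (by omega : 1 ≤ N)]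
      simp [hn, abs_of_nonneg (by linarith : (0:ℝ) ≤ n - 1), (by omega : 1 ≤ N)]
    calc (n - 1) * ‖T‖ = ‖∑ p ∈ univ.filter (fun p : Fin N × Fin N => p.1 < p.2),
          (a p.1 + a p.2)‖ := by rw [e0, e1]
      _ ≤ Q := norm_sum_le _ _
  -- finish
  have hn1 : (0:ℝ) < n - 1 := by linarith
  have hn2 : (0:ℝ) < n - 2 := by linarith
  have hq2 : ‖T‖ ^ 2 * (n - 1) ^ 2 ≤ Q ^ 2 := by
    have h0 : 0 ≤ (n - 1) * ‖T‖ := mul_nonneg hn1.le (norm_nonneg T)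
    nlinarith [mul_le_mul hQ hQ h0 (h0.trans hQ)]
  have hdiv : ‖T‖ ^ 2 ≤ (1 / (n - 1) ^ 2) * Q ^ 2 := by
    rw [one_div, inv_mul_eq_div, le_div_iff₀ (by positivity)]
    exact hq2
  rw [ge_iff_le, one_div, inv_mul_eq_div, div_le_iff₀ hn2]
  nlinarith [hPid, hA, hdiv]
end

section
/- Let ρ be a d×d complex positive semidefinite matrix with trace 1, let 0 < α < 1, and let A_1, …, A_N (N ≥ 2) be d×d Hermitian matrices. Then for each x ∈ {0, 1}: ∑_{i=1}^N I^α_ρ(A_i) ≥ (1/(2N − 2)) · [ (2/(N(N − 1))) · (∑_{1 ≤ i < j ≤ N} √(I^α_ρ(A_i + (−1)^x A_j)))² + ∑_{1 ≤ i < j ≤ N} I^α_ρ(A_i + (−1)^{x+1} A_j) ], where √ denotes the real square root. -/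
open Matrix Finset
open scoped ComplexOrder

/-- `ρ^α` via the continuous functional calculus applied to `t ↦ t ^ α`. -/
noncomputable def mpow {d : ℕ} (ρ : Matrix (Fin d) (Fin d) ℂ) (α : ℝ) :
    Matrix (Fin d) (Fin d) ℂ :=
  cfc (fun t : ℝ => t ^ α) ρ

/-- The Wigner–Yanase–Dyson skew information
`I^α_ρ(A) = −(1/2) Tr([ρ^α, A] [ρ^{1−α}, A])` of an observable `A`. -/
noncomputable def wydObs {d : ℕ} (ρ : Matrix (Fin d) (Fin d) ℂ) (α : ℝ)
    (A : Matrix (Fin d) (Fin d) ℂ) : ℝ :=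
  (-(1 / 2 : ℂ) *
    ((mpow ρ α * A - A * mpow ρ α) * (mpow ρ (1 - α) * A - A * mpow ρ (1 - α))).trace).re

/-- Parallelogram law for the WYD quadratic form. -/
lemma wydObs_parallelogram {d : ℕ} (ρ : Matrix (Fin d) (Fin d) ℂ) (α : ℝ)
    (X Y : Matrix (Fin d) (Fin d) ℂ) :
    wydObs ρ α (X + Y) + wydObs ρ α (X - Y)
      = 2 * wydObs ρ α X + 2 * wydObs ρ α Y := by
  unfold wydObs
  set P := mpow ρ α with hP
  set Q := mpow ρ (1 - α) with hQ
  have h : (-(1/2 : ℂ) * ((P * (X + Y) - (X + Y) * P) * (Q * (X + Y) - (X + Y) * Q)).trace)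
      + (-(1/2 : ℂ) * ((P * (X - Y) - (X - Y) * P) * (Q * (X - Y) - (X - Y) * Q)).trace)
      = 2 * (-(1/2 : ℂ) * ((P * X - X * P) * (Q * X - X * Q)).trace)
        + 2 * (-(1/2 : ℂ) * ((P * Y - Y * P) * (Q * Y - Y * Q)).trace) := by
    simp only [Matrix.mul_add, Matrix.add_mul, Matrix.mul_sub, Matrix.sub_mul,
      Matrix.trace_add, Matrix.trace_sub, Matrix.mul_assoc]
    ring
  have := congrArg Complex.re h
  simpa using this

/-- Spectral representation of the WYD skew information. -/
lemma wydObs_eq_sum {d : ℕ} {ρ X : Matrix (Fin d) (Fin d) ℂ} (hρ : ρ.IsHermitian)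
    (hX : X.IsHermitian) (α : ℝ) :
    wydObs ρ α X = ∑ k, ∑ l,
      (1/2) * ((hρ.eigenvalues k ^ α - hρ.eigenvalues l ^ α) *
        (hρ.eigenvalues k ^ (1 - α) - hρ.eigenvalues l ^ (1 - α))) *
        Complex.normSq ((star (hρ.eigenvectorUnitary : Matrix (Fin d) (Fin d) ℂ) * X *
          (hρ.eigenvectorUnitary : Matrix (Fin d) (Fin d) ℂ)) k l) := by
  set U : Matrix (Fin d) (Fin d) ℂ := (hρ.eigenvectorUnitary : Matrix (Fin d) (Fin d) ℂ) with hUdef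
  have hU2 : U * star U = 1 := Matrix.mem_unitaryGroup_iff.mp hρ.eigenvectorUnitary.2
  have hU1 : star U * U = 1 := Matrix.mem_unitaryGroup_iff'.mp hρ.eigenvectorUnitary.2
  have h1 : ∀ M : Matrix (Fin d) (Fin d) ℂ, U * (star U * M) = M := fun M => by
    rw [← Matrix.mul_assoc, hU2, Matrix.one_mul]
  have h2 : ∀ M : Matrix (Fin d) (Fin d) ℂ, star U * (U * M) = M := fun M => by
    rw [← Matrix.mul_assoc, hU1, Matrix.one_mul]
  set B : Matrix (Fin d) (Fin d) ℂ := star U * X * U with hBdef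
  have hB : B.IsHermitian := by
    unfold Matrix.IsHermitian
    rw [hBdef, Matrix.conjTranspose_mul, Matrix.conjTranspose_mul, hX.eq,
      ← Matrix.star_eq_conjTranspose, ← Matrix.star_eq_conjTranspose, star_star,
      Matrix.mul_assoc]
  have hBsym : ∀ k l, B l k = (starRingEnd ℂ) (B k l) := by
    intro k l
    have := hB.apply k l
    rw [← this]
    simp
  set ev := hρ.eigenvalues with hev
  set c1 : Fin d → ℂ := fun k => ((ev k ^ α : ℝ) : ℂ) with hc1
  set c2 : Fin d → ℂ := fun k => ((ev k ^ (1 - α) : ℝ) : ℂ) with hc2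
  have hPd : mpow ρ α = U * diagonal c1 * star U := by
    rw [mpow, hρ.cfc_eq]; rfl
  have hQd : mpow ρ (1 - α) = U * diagonal c2 * star U := by
    rw [mpow, hρ.cfc_eq]; rfl
  set M1 : Matrix (Fin d) (Fin d) ℂ := diagonal c1 * B - B * diagonal c1 with hM1
  set M2 : Matrix (Fin d) (Fin d) ℂ := diagonal c2 * B - B * diagonal c2 with hM2
  have hcomm : ∀ D : Matrix (Fin d) (Fin d) ℂ,
      (U * D * star U) * X - X * (U * D * star U)
        = U * ((D * B - B * D) * star U) := by
    intro D
    rw [hBdef]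
    simp only [Matrix.mul_sub, Matrix.sub_mul, Matrix.mul_assoc, h1, h2, hU1, hU2,
      Matrix.mul_one, Matrix.one_mul]
  have hprod : (mpow ρ α * X - X * mpow ρ α) * (mpow ρ (1 - α) * X - X * mpow ρ (1 - α))
      = U * ((M1 * M2) * star U) := by
    rw [hPd, hQd, hcomm, hcomm, hM1, hM2]
    simp only [Matrix.mul_assoc, h1, h2, hU1, hU2, Matrix.mul_one, Matrix.one_mul]
  have htr : ((mpow ρ α * X - X * mpow ρ α) *
      (mpow ρ (1 - α) * X - X * mpow ρ (1 - α))).trace = (M1 * M2).trace := by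
    rw [hprod, Matrix.trace_mul_comm]
    simp only [Matrix.mul_assoc, hU1, Matrix.mul_one]
  have htr2 : (M1 * M2).trace = ∑ k, ∑ l, M1 k l * M2 l k := by
    simp [Matrix.trace, Matrix.diag, Matrix.mul_apply]
  have hM1e : ∀ k l, M1 k l = (c1 k - c1 l) * B k l := by
    intro k l
    simp only [hM1, Matrix.sub_apply, Matrix.diagonal_mul, Matrix.mul_diagonal]
    ring
  have hM2e : ∀ k l, M2 k l = (c2 k - c2 l) * B k l := by
    intro k l
    simp only [hM2, Matrix.sub_apply, Matrix.diagonal_mul, Matrix.mul_diagonal]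
    ring
  rw [wydObs, htr, htr2, Finset.mul_sum]
  rw [Complex.re_sum]
  refine Finset.sum_congr rfl fun k _ => ?_
  rw [Finset.mul_sum, Complex.re_sum]
  refine Finset.sum_congr rfl fun l _ => ?_
  rw [hM1e, hM2e, hBsym k l]
  have : -(1/2 : ℂ) * ((c1 k - c1 l) * B k l * ((c2 l - c2 k) * (starRingEnd ℂ) (B k l)))
      = (((1/2) * ((ev k ^ α - ev l ^ α) * (ev k ^ (1 - α) - ev l ^ (1 - α))) *
          Complex.normSq (B k l) : ℝ) : ℂ) := by
    have hmc : B k l * (starRingEnd ℂ) (B k l) = (Complex.normSq (B k l) : ℂ) :=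
      Complex.mul_conj _
    rw [hc1, hc2]
    push_cast
    rw [← hmc]
    ring
  rw [this, Complex.ofReal_re]

/-- The WYD skew information of a Hermitian observable is nonnegative. -/
lemma wydObs_nonneg {d : ℕ} {ρ : Matrix (Fin d) (Fin d) ℂ} (hρ : ρ.PosSemidef)
    {α : ℝ} (hα0 : 0 ≤ α) (hα1 : α ≤ 1) {X : Matrix (Fin d) (Fin d) ℂ}
    (hX : X.IsHermitian) : 0 ≤ wydObs ρ α X := by
  rw [wydObs_eq_sum hρ.isHermitian hX α]
  refine Finset.sum_nonneg fun k _ => Finset.sum_nonneg fun l _ => ?_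
  have hk := hρ.eigenvalues_nonneg k
  have hl := hρ.eigenvalues_nonneg l
  have h1α : (0 : ℝ) ≤ 1 - α := by linarith
  have key : 0 ≤ (hρ.isHermitian.eigenvalues k ^ α - hρ.isHermitian.eigenvalues l ^ α) *
      (hρ.isHermitian.eigenvalues k ^ (1 - α) - hρ.isHermitian.eigenvalues l ^ (1 - α)) := by
    rcases le_total (hρ.isHermitian.eigenvalues k) (hρ.isHermitian.eigenvalues l) with h | h
    · have ha : hρ.isHermitian.eigenvalues k ^ α ≤ hρ.isHermitian.eigenvalues l ^ α :=
        Real.rpow_le_rpow hk h hα0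
      have hb : hρ.isHermitian.eigenvalues k ^ (1 - α)
          ≤ hρ.isHermitian.eigenvalues l ^ (1 - α) := Real.rpow_le_rpow hk h h1α
      nlinarith
    · have ha : hρ.isHermitian.eigenvalues l ^ α ≤ hρ.isHermitian.eigenvalues k ^ α :=
        Real.rpow_le_rpow hl h hα0
      have hb : hρ.isHermitian.eigenvalues l ^ (1 - α)
          ≤ hρ.isHermitian.eigenvalues k ^ (1 - α) := Real.rpow_le_rpow hl h h1α
      nlinarith
  have := Complex.normSq_nonneg ((star (hρ.isHermitian.eigenvectorUnitary :
    Matrix (Fin d) (Fin d) ℂ) * X * (hρ.isHermitian.eigenvectorUnitary :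
    Matrix (Fin d) (Fin d) ℂ)) k l)
  positivity

lemma sum_pair_lt {N : ℕ} (f : Fin N → ℝ) :
    ∑ p ∈ univ.filter (fun p : Fin N × Fin N => p.1 < p.2), (f p.1 + f p.2)
      = ((N : ℝ) - 1) * ∑ i, f i := by
  classical
  set S := univ.filter (fun p : Fin N × Fin N => p.1 < p.2) with hS
  set S' := univ.filter (fun p : Fin N × Fin N => p.2 < p.1) with hS'
  have hswap : ∑ p ∈ S, f p.2 = ∑ p ∈ S', f p.1 := by
    refine Finset.sum_nbij' Prod.swap Prod.swap ?_ ?_ ?_ ?_ ?_ <;>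
      simp [hS, hS', Prod.swap, Set.MapsTo, Set.LeftInvOn, Set.RightInvOn]
  have hunion : univ.offDiag = S ∪ S' := by
    ext p
    simp only [hS, hS', Finset.mem_offDiag, Finset.mem_union, Finset.mem_filter,
      Finset.mem_univ, true_and, ne_eq]
    constructor
    · intro h
      exact lt_or_gt_of_ne h
    · intro h
      rcases h with h | h
      · exact ne_of_lt h
      · exact ne_of_gt h
  have hdisj : Disjoint S S' := by
    rw [Finset.disjoint_left]
    intro p hp hp'
    simp only [hS, hS', Finset.mem_filter] at hp hp'
    exact absurd hp'.2 (lt_asymm hp.2)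
  have hsplit : ∑ p ∈ S, (f p.1 + f p.2) = ∑ p ∈ univ.offDiag, f p.1 := by
    rw [Finset.sum_add_distrib, hswap, hunion, Finset.sum_union hdisj]
  rw [hsplit]
  have hoff : (univ.offDiag : Finset (Fin N × Fin N))
      = (univ ×ˢ univ).filter (fun p => ¬ p.1 = p.2) := by
    ext p; simp [Finset.mem_offDiag]
  have htot : ∑ p ∈ (univ ×ˢ univ : Finset (Fin N × Fin N)), f p.1 = (N : ℝ) * ∑ i, f i := by
    rw [Finset.sum_product]
    simp [Finset.sum_const, Finset.card_univ, nsmul_eq_mul, Finset.mul_sum]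
  have hdiag : ∑ p ∈ (univ ×ˢ univ : Finset (Fin N × Fin N)).filter (fun p => p.1 = p.2),
      f p.1 = ∑ i, f i := by
    have he : (univ ×ˢ univ : Finset (Fin N × Fin N)).filter (fun p => p.1 = p.2)
        = univ.diag := by
      ext p; simp [Finset.mem_diag]
    rw [he, Finset.sum_diag]
  have := Finset.sum_filter_add_sum_filter_not (univ ×ˢ univ : Finset (Fin N × Fin N))
    (fun p => p.1 = p.2) (fun p => f p.1)
  rw [hoff]
  rw [htot] at this
  rw [hdiag] at this
  linarith

lemma card_pair_lt (N : ℕ) :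
    2 * (univ.filter (fun p : Fin N × Fin N => p.1 < p.2)).card + N = N * N := by
  classical
  set S := univ.filter (fun p : Fin N × Fin N => p.1 < p.2) with hS
  set S' := univ.filter (fun p : Fin N × Fin N => p.2 < p.1) with hS'
  have hcard : S.card = S'.card := by
    refine Finset.card_nbij' Prod.swap Prod.swap ?_ ?_ ?_ ?_ <;>
      simp [hS, hS', Prod.swap, Set.MapsTo, Set.LeftInvOn, Set.RightInvOn]
  have hunion : univ.offDiag = S ∪ S' := by
    ext p
    simp only [hS, hS', Finset.mem_offDiag, Finset.mem_union, Finset.mem_filter,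
      Finset.mem_univ, true_and, ne_eq]
    constructor
    · intro h
      exact lt_or_gt_of_ne h
    · intro h
      rcases h with h | h
      · exact ne_of_lt h
      · exact ne_of_gt h
  have hdisj : Disjoint S S' := by
    rw [Finset.disjoint_left]
    intro p hp hp'
    simp only [hS, hS', Finset.mem_filter] at hp hp'
    exact absurd hp'.2 (lt_asymm hp.2)
  have h1 : (univ.offDiag : Finset (Fin N × Fin N)).card = S.card + S'.card := by
    rw [hunion, Finset.card_union_of_disjoint hdisj]
  rw [Finset.offDiag_card, Finset.card_univ, Fintype.card_fin] at h1
  have hNN : N ≤ N * N := by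
    cases N with
    | zero => simp
    | succ n => exact Nat.le_mul_of_pos_left _ (Nat.succ_pos n)
  rw [Nat.sub_eq_iff_eq_add hNN] at h1
  rw [h1, hcard]
  ring

lemma core_ineq {N : ℕ} (hN : 2 ≤ N) (q : Fin N → ℝ) (t u : Fin N × Fin N → ℝ)
    (ht : ∀ p ∈ univ.filter (fun p : Fin N × Fin N => p.1 < p.2), 0 ≤ t p)
    (htu : ∀ p ∈ univ.filter (fun p : Fin N × Fin N => p.1 < p.2),
      t p + u p = 2 * q p.1 + 2 * q p.2) :
    ∑ i, q i ≥
      (1 / (2 * (N : ℝ) - 2)) *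
        ((2 / ((N : ℝ) * ((N : ℝ) - 1))) *
            (∑ p ∈ univ.filter (fun p : Fin N × Fin N => p.1 < p.2), Real.sqrt (t p)) ^ 2 +
          ∑ p ∈ univ.filter (fun p : Fin N × Fin N => p.1 < p.2), u p) := by
  classical
  set S := univ.filter (fun p : Fin N × Fin N => p.1 < p.2) with hS
  have hNR : (2 : ℝ) ≤ (N : ℝ) := by exact_mod_cast hN
  have hpos1 : (0 : ℝ) < 2 * (N : ℝ) - 2 := by linarith
  have hpos2 : (0 : ℝ) < (N : ℝ) * ((N : ℝ) - 1) := by nlinarith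
  have hCS : (∑ p ∈ S, Real.sqrt (t p)) ^ 2 ≤ (S.card : ℝ) * ∑ p ∈ S, t p := by
    have := sq_sum_le_card_mul_sum_sq (s := S) (f := fun p => Real.sqrt (t p))
    calc (∑ p ∈ S, Real.sqrt (t p)) ^ 2 ≤ (S.card : ℝ) * ∑ p ∈ S, Real.sqrt (t p) ^ 2 := this
      _ = (S.card : ℝ) * ∑ p ∈ S, t p := by
          congr 1
          exact Finset.sum_congr rfl fun p hp => Real.sq_sqrt (ht p hp)
  have hT0 : 0 ≤ ∑ p ∈ S, t p := Finset.sum_nonneg ht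
  have hcard : 2 * (S.card : ℝ) + N = N * N := by exact_mod_cast card_pair_lt N
  have hpair : ∑ p ∈ S, t p + ∑ p ∈ S, u p = (2 * (N : ℝ) - 2) * ∑ i, q i := by
    have h1 : ∑ p ∈ S, (t p + u p) = ∑ p ∈ S, (2 * q p.1 + 2 * q p.2) :=
      Finset.sum_congr rfl htu
    have h2 : ∑ p ∈ S, (2 * q p.1 + 2 * q p.2) = 2 * ∑ p ∈ S, (q p.1 + q p.2) := by
      rw [Finset.mul_sum]; exact Finset.sum_congr rfl fun p _ => by ring
    rw [← Finset.sum_add_distrib, h1, h2, sum_pair_lt]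
    ring
  rw [ge_iff_le, one_div, inv_mul_le_iff₀ hpos1]
  have hsq : 2 / ((N : ℝ) * ((N : ℝ) - 1)) * (∑ p ∈ S, Real.sqrt (t p)) ^ 2
      ≤ ∑ p ∈ S, t p := by
    rw [div_mul_eq_mul_div, div_le_iff₀ hpos2]
    nlinarith [hCS, hT0]
  nlinarith [hsq, hpair]

set_option maxHeartbeats 1000000 in
theorem wyd_skew_information_uncertainty (d N : ℕ) (hN : 2 ≤ N)
    (ρ : Matrix (Fin d) (Fin d) ℂ) (hρ : ρ.PosSemidef) (hTr : ρ.trace = 1)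
    (α : ℝ) (hα0 : 0 < α) (hα1 : α < 1)
    (A : Fin N → Matrix (Fin d) (Fin d) ℂ) (hA : ∀ i, (A i).IsHermitian) :
    ∀ x ∈ ({0, 1} : Set ℕ),
      ∑ i, wydObs ρ α (A i) ≥
        (1 / (2 * (N : ℝ) - 2)) *
          ((2 / ((N : ℝ) * ((N : ℝ) - 1))) *
              (∑ p ∈ univ.filter (fun p : Fin N × Fin N => p.1 < p.2),
                Real.sqrt (wydObs ρ α (A p.1 + ((-1 : ℂ) ^ x) • A p.2))) ^ 2 +
            ∑ p ∈ univ.filter (fun p : Fin N × Fin N => p.1 < p.2),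
              wydObs ρ α (A p.1 + ((-1 : ℂ) ^ (x + 1)) • A p.2)) := by
  have hα0' : (0 : ℝ) ≤ α := le_of_lt hα0
  have hα1' : α ≤ 1 := le_of_lt hα1
  intro x hx
  rcases hx with rfl | hx
  · -- x = 0
    simp only [zero_add, pow_zero, pow_one, one_smul, neg_one_smul, ← sub_eq_add_neg]
    exact core_ineq hN (fun i => wydObs ρ α (A i))
      (fun p => wydObs ρ α (A p.1 + A p.2)) (fun p => wydObs ρ α (A p.1 - A p.2))
      (fun p _ => wydObs_nonneg hρ hα0' hα1' ((hA p.1).add (hA p.2)))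
      (fun p _ => wydObs_parallelogram ρ α (A p.1) (A p.2))
  · -- x = 1
    rw [Set.mem_singleton_iff] at hx
    subst hx
    simp only [pow_one, neg_one_smul, ← sub_eq_add_neg]
    have hsq : ((-1 : ℂ)) ^ (1 + 1) = 1 := by norm_num
    rw [hsq]
    simp only [one_smul]
    exact core_ineq hN (fun i => wydObs ρ α (A i))
      (fun p => wydObs ρ α (A p.1 - A p.2)) (fun p => wydObs ρ α (A p.1 + A p.2))
      (fun p _ => wydObs_nonneg hρ hα0' hα1' ((hA p.1).sub (hA p.2)))
      (fun p _ => by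
        have := wydObs_parallelogram ρ α (A p.1) (A p.2)
        linarith)
end
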